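/- Let ξ > 0, ν ∈ ℝ, E₀ ∈ ℝ, E_m > 0 be reals, set c := exp(−ξ·E₀ + ν), and define γ(x) := max(0, (E_m/c)·((1 + c)/(1 + exp(−ξ·x + ν)) − 1)). Then for every t with 0 < t < E_m and every E ∈ ℝ: γ(E) ≥ t if and only if E ≥ E₀ − ξ⁻¹·ln((E_m − t)/(E_m + t·c)). (Equivalence of the harvested-power constraint γ(E_in) ≥ E_th with the input-power constraint E_in ≥ γ̄(E_th).) -/

import Mathlib

/-- Equivalence of the harvested-power constraint `γ(E) ≥ t` with the
input-power constraint `E ≥ E₀ − ξ⁻¹·ln((E_m − t)/(E_m + t·c))` for `0 < t < E_m`. -/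
theorem eh_constraint_equivalence (ξ ν E₀ Em : ℝ) (hξ : 0 < ξ) (hEm : 0 < Em)
    (c : ℝ) (hc : c = Real.exp (-ξ * E₀ + ν))
    (γ : ℝ → ℝ)
    (hγ : ∀ x, γ x = max 0 ((Em / c) * ((1 + c) / (1 + Real.exp (-ξ * x + ν)) - 1))) :
    ∀ t : ℝ, 0 < t → t < Em → ∀ E : ℝ,
      (γ E ≥ t ↔ E ≥ E₀ - ξ⁻¹ * Real.log ((Em - t) / (Em + t * c))) := by
  have hc0 : 0 < c := hc ▸ Real.exp_pos _
  intro t ht htm E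
  set u := Real.exp (-ξ * E + ν) with hu
  have hu0 : 0 < u := Real.exp_pos _
  have hden : 0 < Em + t * c := by positivity
  have hr : 0 < (Em - t) / (Em + t * c) := div_pos (by linarith) hden
  set L := Real.log ((Em - t) / (Em + t * c)) with hL
  rw [hγ, ge_iff_le, ge_iff_le]
  have h1 : (t ≤ max 0 ((Em / c) * ((1 + c) / (1 + u) - 1))) ↔
      t ≤ (Em / c) * ((1 + c) / (1 + u) - 1) := by
    rw [le_max_iff]
    constructor
    · rintro (h | h)
      · linarith
      · exact h
    · exact Or.inr
  rw [h1]
  have heq : (Em / c) * ((1 + c) / (1 + u) - 1) = Em * (c - u) / (c * (1 + u)) := by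
    field_simp
    ring
  have h2 : t ≤ (Em / c) * ((1 + c) / (1 + u) - 1) ↔
      u ≤ c * ((Em - t) / (Em + t * c)) := by
    rw [heq, le_div_iff₀ (by positivity), ← mul_div_assoc, le_div_iff₀ hden]
    constructor <;> intro h <;> nlinarith
  rw [h2]
  have hcr : c * ((Em - t) / (Em + t * c)) = Real.exp (-ξ * E₀ + ν + L) := by
    rw [Real.exp_add, ← hc, hL, Real.exp_log hr]
  rw [hcr, hu, Real.exp_le_exp]
  have hkey : ξ * (E₀ - ξ⁻¹ * L) = ξ * E₀ - L := by
    field_simp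
  constructor <;> intro h
  · have h' : ξ * (E₀ - ξ⁻¹ * L) ≤ ξ * E := by
      rw [hkey]; linarith
    exact le_of_mul_le_mul_left h' hξ
  · have h' : ξ * (E₀ - ξ⁻¹ * L) ≤ ξ * E :=
      mul_le_mul_of_nonneg_left h hξ.le
    rw [hkey] at h'
    linarith
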